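/- Let g be a Lie algebra over a field K and let r ∈ g ⊗ g be antisymmetric. Define a bilinear bracket on the dual space g* by [ξ, η]_r(x) := (ξ ⊗ η)(δ_r(x)), where (ξ⊗η)(a⊗b) := ξ(a)η(b) and δ_r(x) = ⁅x, r⁆. Then [·,·]_r satisfies the Jacobi identity [ξ, [η, ζ]_r]_r + [η, [ζ, ξ]_r]_r + [ζ, [ξ, η]_r]_r = 0 for all ξ, η, ζ ∈ g* if and only if ⟦r, r⟧ is g-invariant, i.e. ⁅x, ⟦r, r⟧⁆ = 0 in g⊗g⊗g for every x ∈ g (the modified classical Yang–Baxter equation). Equivalently, the map δ_r is a cocommutator (its dual is a Lie bracket on g*) precisely when r solves the mCYBE. -/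

import Mathlib

open TensorProduct

/-- The Lie bracket of `g`, as a linear map `g ⊗ g → g`. -/
noncomputable def lieBracketTensor (K : Type*) [Field K] (L : Type*) [LieRing L]
    [LieAlgebra K L] : L ⊗[K] L →ₗ[K] L :=
  TensorProduct.lift (LieAlgebra.ad K L : L →ₗ[K] L →ₗ[K] L)

/-- The linear map `(g⊗g) ⊗ (g⊗g) → g⊗g⊗g` determined on pure tensors by
`(a⊗b)⊗(c⊗d) ↦ ⁅a,c⁆⊗b⊗d + a⊗⁅b,c⁆⊗d + a⊗c⊗⁅b,d⁆`; applied to `r ⊗ r` it yields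
`⟦r,r⟧ = [r₁₂,r₁₃] + [r₁₂,r₂₃] + [r₁₃,r₂₃]`. -/
noncomputable def ybMap (K : Type*) [Field K] (L : Type*) [LieRing L] [LieAlgebra K L] :
    (L ⊗[K] L) ⊗[K] (L ⊗[K] L) →ₗ[K] L ⊗[K] (L ⊗[K] L) :=
  (TensorProduct.map (lieBracketTensor K L) (LinearMap.id : L ⊗[K] L →ₗ[K] L ⊗[K] L)).comp
      (TensorProduct.tensorTensorTensorComm K L L L L).toLinearMap
  + (TensorProduct.map (LinearMap.id : L →ₗ[K] L)
        ((TensorProduct.map (lieBracketTensor K L) (LinearMap.id : L →ₗ[K] L)).comp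
          (TensorProduct.assoc K L L L).symm.toLinearMap)).comp
      (TensorProduct.assoc K L L (L ⊗[K] L)).toLinearMap
  + (TensorProduct.map (LinearMap.id : L →ₗ[K] L)
        (TensorProduct.map (LinearMap.id : L →ₗ[K] L) (lieBracketTensor K L))).comp
      ((TensorProduct.assoc K L L (L ⊗[K] L)).toLinearMap.comp
        (TensorProduct.tensorTensorTensorComm K L L L L).toLinearMap)

/-- For `r ∈ g ⊗ g`, the linear map `δ_r : g → g ⊗ g`, `δ_r(x) = ⁅x, r⁆`. -/
noncomputable def deltaR {K : Type*} [Field K] {L : Type*} [LieRing L] [LieAlgebra K L]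
    (r : L ⊗[K] L) : L →ₗ[K] L ⊗[K] L where
  toFun x := ⁅x, r⁆
  map_add' x y := add_lie x y r
  map_smul' t x := smul_lie t x r

/-- The bracket on `g*` induced by `r ∈ g ⊗ g`: `[ξ, η]_r(x) = (ξ ⊗ η)(δ_r(x))`. -/
noncomputable def rBracket {K : Type*} [Field K] {L : Type*} [LieRing L] [LieAlgebra K L]
    (r : L ⊗[K] L) (ξ η : Module.Dual K L) : Module.Dual K L :=
  (TensorProduct.dualDistrib K L L (ξ ⊗ₜ[K] η)).comp (deltaR r)

/-! ### Auxiliary machinery -/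

set_option linter.unusedSectionVars false
set_option maxHeartbeats 1600000

section YBAux

variable {K : Type*} [Field K] {L : Type*} [LieRing L] [LieAlgebra K L]

/-- cyclic rotation `u ⊗ (v ⊗ w) ↦ w ⊗ (u ⊗ v)` -/
noncomputable def cyc3 (K : Type*) [Field K] (L : Type*) [LieRing L] [LieAlgebra K L] :
    L ⊗[K] (L ⊗[K] L) →ₗ[K] L ⊗[K] (L ⊗[K] L) :=
  (TensorProduct.comm K (L ⊗[K] L) L).toLinearMap.comp
    (TensorProduct.assoc K L L L).symm.toLinearMap

@[simp] lemma cyc3_tmul (u v w : L) :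
    cyc3 K L (u ⊗ₜ[K] (v ⊗ₜ[K] w)) = w ⊗ₜ[K] (u ⊗ₜ[K] v) := by
  simp [cyc3]

/-- the functional `u ⊗ v ⊗ w ↦ ξ(u)η(v)ζ(w)` -/
noncomputable def trip (ξ η ζ : Module.Dual K L) : Module.Dual K (L ⊗[K] (L ⊗[K] L)) :=
  TensorProduct.dualDistrib K L (L ⊗[K] L)
    (ξ ⊗ₜ[K] TensorProduct.dualDistrib K L L (η ⊗ₜ[K] ζ))

@[simp] lemma trip_tmul (ξ η ζ : Module.Dual K L) (u : L) (t : L ⊗[K] L) :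
    trip ξ η ζ (u ⊗ₜ[K] t) = ξ u * TensorProduct.dualDistrib K L L (η ⊗ₜ[K] ζ) t := by
  simp [trip]

lemma trip_cyc3 (ξ η ζ : Module.Dual K L) (t : L ⊗[K] (L ⊗[K] L)) :
    trip ξ η ζ (cyc3 K L t) = trip η ζ ξ t := by
  induction t using TensorProduct.induction_on with
  | zero => simp
  | add a b ha hb => simp [map_add, ha, hb]
  | tmul u v =>
    induction v using TensorProduct.induction_on with
    | zero => simp
    | add a b ha hb => simp only [tmul_add, map_add, ha, hb]
    | tmul p q => simp [mul_comm, mul_left_comm]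

lemma trip_eq_zero_iff (t : L ⊗[K] (L ⊗[K] L)) :
    (∀ ξ η ζ : Module.Dual K L, trip ξ η ζ t = 0) ↔ t = 0 := by
  constructor
  · intro h
    let b := Module.Basis.ofVectorSpace K L
    let B := b.tensorProduct (b.tensorProduct b)
    have key : ∀ (i j k) (u : L ⊗[K] (L ⊗[K] L)),
        trip (b.coord i) (b.coord j) (b.coord k) u = B.repr u (i, (j, k)) := by
      intro i j k u
      induction u using TensorProduct.induction_on with
      | zero => simp
      | add a c ha hc => simp [map_add, ha, hc]
      | tmul u v =>
        induction v using TensorProduct.induction_on with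
        | zero => simp [trip]
        | add a c ha hc => simp only [tmul_add, map_add, ha, hc, Finsupp.add_apply]
        | tmul p q =>
          simp [trip, B, Module.Basis.tensorProduct_repr_tmul_apply, Module.Basis.coord_apply,
            smul_eq_mul]
          ring
    apply B.ext_elem
    intro ⟨i, j, k⟩
    simp [← key i j k t, h]
  · rintro rfl; simp

lemma lie_sum' {M : Type*} [AddCommGroup M] [LieRingModule L M] (x : L)
    {ι : Type*} (s : Finset ι) (f : ι → M) :
    ⁅x, ∑ i ∈ s, f i⁆ = ∑ i ∈ s, ⁅x, f i⁆ :=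
  map_sum (AddMonoidHom.mk' (fun m => ⁅x, m⁆) (lie_add x)) f s

lemma ybMap_tmul (a b c d : L) :
    ybMap K L ((a ⊗ₜ[K] b) ⊗ₜ[K] (c ⊗ₜ[K] d)) =
      ⁅a, c⁆ ⊗ₜ[K] (b ⊗ₜ[K] d) + a ⊗ₜ[K] (⁅b, c⁆ ⊗ₜ[K] d) + a ⊗ₜ[K] (c ⊗ₜ[K] ⁅b, d⁆) := by
  simp [ybMap, lieBracketTensor, tensorTensorTensorComm_tmul]

variable {V : Type*} [AddCommGroup V] [Module K V]

/-- double sum over a representation of `r` -/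
noncomputable def S4 (s : Finset (L × L)) (f : L → L → L → L → V) : V :=
  ∑ p ∈ s, ∑ q ∈ s, f p.1 p.2 q.1 q.2

lemma S4_congr (s : Finset (L × L)) (f g : L → L → L → L → V)
    (h : ∀ a b c d, f a b c d = g a b c d) : S4 s f = S4 s g :=
  Finset.sum_congr rfl fun p _ => Finset.sum_congr rfl fun q _ => h p.1 p.2 q.1 q.2

lemma S4_neg (s : Finset (L × L)) (f : L → L → L → L → V) :
    S4 s (fun a b c d => - f a b c d) = - S4 s f := by
  simp [S4]

lemma S4_sub (s : Finset (L × L)) (f g : L → L → L → L → V) :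
    S4 s (fun a b c d => f a b c d - g a b c d) = S4 s f - S4 s g := by
  simp [S4, Finset.sum_sub_distrib]

lemma S4_swap_pairs (s : Finset (L × L)) (f : L → L → L → L → V) :
    S4 s (fun a b c d => f c d a b) = S4 s f := by
  simpa [S4] using Finset.sum_comm

section flips
variable {r : L ⊗[K] L} {s : Finset (L × L)}
  (hr : TensorProduct.comm K L L r = -r) (hs : r = ∑ p ∈ s, p.1 ⊗ₜ[K] p.2)

include hr hs in
lemma sum_flip (g : L → L → V)
    (h1 : ∀ u u' v, g (u + u') v = g u v + g u' v)
    (h2 : ∀ (c : K) u v, g (c • u) v = c • g u v)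
    (h3 : ∀ u v v', g u (v + v') = g u v + g u v')
    (h4 : ∀ (c : K) u v, g u (c • v) = c • g u v) :
    ∑ p ∈ s, g p.2 p.1 = - ∑ p ∈ s, g p.1 p.2 := by
  have h := congrArg (TensorProduct.lift (LinearMap.mk₂ K g h1 h2 h3 h4)) hr
  rw [hs] at h
  simpa [map_sum, TensorProduct.comm_tmul, TensorProduct.lift.tmul] using h

include hr hs in
lemma S4_flip₁ (f : L → L → L → L → V)
    (h1 : ∀ u u' v c d, f (u + u') v c d = f u v c d + f u' v c d)
    (h2 : ∀ (t : K) u v c d, f (t • u) v c d = t • f u v c d)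
    (h3 : ∀ u v v' c d, f u (v + v') c d = f u v c d + f u v' c d)
    (h4 : ∀ (t : K) u v c d, f u (t • v) c d = t • f u v c d) :
    S4 s (fun a b c d => f b a c d) = - S4 s f := by
  unfold S4
  exact sum_flip hr hs (fun u v => ∑ q ∈ s, f u v q.1 q.2)
    (fun u u' v => by simp [h1, Finset.sum_add_distrib])
    (fun c u v => by simp [h2, Finset.smul_sum])
    (fun u v v' => by simp [h3, Finset.sum_add_distrib])
    (fun c u v => by simp [h4, Finset.smul_sum])

include hr hs in
lemma S4_flip₂ (f : L → L → L → L → V)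
    (h1 : ∀ a b u u' v, f a b (u + u') v = f a b u v + f a b u' v)
    (h2 : ∀ (t : K) a b u v, f a b (t • u) v = t • f a b u v)
    (h3 : ∀ a b u v v', f a b u (v + v') = f a b u v + f a b u v')
    (h4 : ∀ (t : K) a b u v, f a b u (t • v) = t • f a b u v) :
    S4 s (fun a b c d => f a b d c) = - S4 s f := by
  have h := sum_flip hr hs (fun u v => ∑ x ∈ s, f x.1 x.2 u v)
    (fun u u' v => by simp [h1, Finset.sum_add_distrib])
    (fun c u v => by simp [h2, Finset.smul_sum])
    (fun u v v' => by simp [h3, Finset.sum_add_distrib])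
    (fun c u v => by simp [h4, Finset.smul_sum])
  calc S4 s (fun a b c d => f a b d c)
      = ∑ y ∈ s, ∑ x ∈ s, f x.1 x.2 y.2 y.1 := Finset.sum_comm
    _ = -∑ y ∈ s, ∑ x ∈ s, f x.1 x.2 y.1 y.2 := h
    _ = - S4 s f := congrArg Neg.neg Finset.sum_comm

end flips
end YBAux
section YBAux2

variable {K : Type*} [Field K] {L : Type*} [LieRing L] [LieAlgebra K L]
variable {r : L ⊗[K] L} {s : Finset (L × L)}

lemma delta_expand (hs : r = ∑ p ∈ s, p.1 ⊗ₜ[K] p.2) (v : L) :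
    deltaR r v = ∑ p ∈ s, (⁅v, p.1⁆ ⊗ₜ[K] p.2 + p.1 ⊗ₜ[K] ⁅v, p.2⁆) := by
  show ⁅v, r⁆ = _
  rw [hs, lie_sum']
  simp [TensorProduct.LieModule.lie_tmul_right]

lemma W_expand (hs : r = ∑ p ∈ s, p.1 ⊗ₜ[K] p.2) (x : L) :
    TensorProduct.map LinearMap.id (deltaR r) (deltaR r x) =
      ∑ p ∈ s, ∑ q ∈ s,
        (⁅x, p.1⁆ ⊗ₜ[K] (⁅p.2, q.1⁆ ⊗ₜ[K] q.2) + ⁅x, p.1⁆ ⊗ₜ[K] (q.1 ⊗ₜ[K] ⁅p.2, q.2⁆)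
          + p.1 ⊗ₜ[K] (⁅⁅x, p.2⁆, q.1⁆ ⊗ₜ[K] q.2) + p.1 ⊗ₜ[K] (q.1 ⊗ₜ[K] ⁅⁅x, p.2⁆, q.2⁆)) := by
  rw [delta_expand hs x, map_sum]
  refine Finset.sum_congr rfl fun p _ => ?_
  rw [map_add, TensorProduct.map_tmul, TensorProduct.map_tmul, delta_expand hs,
    delta_expand hs]
  simp only [LinearMap.id_coe, id_eq, tmul_sum, tmul_add, ← Finset.sum_add_distrib]
  exact Finset.sum_congr rfl fun q _ => by abel

lemma rr_expand (hs : r = ∑ p ∈ s, p.1 ⊗ₜ[K] p.2) :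
    r ⊗ₜ[K] r = ∑ p ∈ s, ∑ q ∈ s, (p.1 ⊗ₜ[K] p.2) ⊗ₜ[K] (q.1 ⊗ₜ[K] q.2) := by
  conv_lhs => rw [hs, sum_tmul]
  exact Finset.sum_congr rfl fun p _ => by rw [tmul_sum]

lemma rhs_expand (hs : r = ∑ p ∈ s, p.1 ⊗ₜ[K] p.2) (x : L) :
    ⁅x, ybMap K L (r ⊗ₜ[K] r)⁆ =
      ∑ p ∈ s, ∑ q ∈ s,
        (⁅x, ⁅p.1, q.1⁆⁆ ⊗ₜ[K] (p.2 ⊗ₜ[K] q.2) + ⁅p.1, q.1⁆ ⊗ₜ[K] (⁅x, p.2⁆ ⊗ₜ[K] q.2)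
          + ⁅p.1, q.1⁆ ⊗ₜ[K] (p.2 ⊗ₜ[K] ⁅x, q.2⁆)
          + (⁅x, p.1⁆ ⊗ₜ[K] (⁅p.2, q.1⁆ ⊗ₜ[K] q.2) + p.1 ⊗ₜ[K] (⁅x, ⁅p.2, q.1⁆⁆ ⊗ₜ[K] q.2)
            + p.1 ⊗ₜ[K] (⁅p.2, q.1⁆ ⊗ₜ[K] ⁅x, q.2⁆))
          + (⁅x, p.1⁆ ⊗ₜ[K] (q.1 ⊗ₜ[K] ⁅p.2, q.2⁆) + p.1 ⊗ₜ[K] (⁅x, q.1⁆ ⊗ₜ[K] ⁅p.2, q.2⁆)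
            + p.1 ⊗ₜ[K] (q.1 ⊗ₜ[K] ⁅x, ⁅p.2, q.2⁆⁆))) := by
  rw [rr_expand hs, map_sum, lie_sum']
  refine Finset.sum_congr rfl fun p _ => ?_
  rw [map_sum, lie_sum']
  refine Finset.sum_congr rfl fun q _ => ?_
  rw [ybMap_tmul]
  simp only [lie_add, TensorProduct.LieModule.lie_tmul_right, tmul_add]
  abel

lemma combinatorial (hr : TensorProduct.comm K L L r = -r)
    (hs : r = ∑ p ∈ s, p.1 ⊗ₜ[K] p.2) (x : L) :
    S4 s (fun a b c d => ⁅x, a⁆ ⊗ₜ[K] (⁅b, c⁆ ⊗ₜ[K] d) + ⁅x, a⁆ ⊗ₜ[K] (c ⊗ₜ[K] ⁅b, d⁆)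
        + a ⊗ₜ[K] (⁅⁅x, b⁆, c⁆ ⊗ₜ[K] d) + a ⊗ₜ[K] (c ⊗ₜ[K] ⁅⁅x, b⁆, d⁆))
    + S4 s (fun a b c d => d ⊗ₜ[K] (⁅x, a⁆ ⊗ₜ[K] ⁅b, c⁆) + ⁅b, d⁆ ⊗ₜ[K] (⁅x, a⁆ ⊗ₜ[K] c)
        + d ⊗ₜ[K] (a ⊗ₜ[K] ⁅⁅x, b⁆, c⁆) + ⁅⁅x, b⁆, d⁆ ⊗ₜ[K] (a ⊗ₜ[K] c))
    + S4 s (fun a b c d => ⁅b, c⁆ ⊗ₜ[K] (d ⊗ₜ[K] ⁅x, a⁆) + c ⊗ₜ[K] (⁅b, d⁆ ⊗ₜ[K] ⁅x, a⁆)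
        + ⁅⁅x, b⁆, c⁆ ⊗ₜ[K] (d ⊗ₜ[K] a) + c ⊗ₜ[K] (⁅⁅x, b⁆, d⁆ ⊗ₜ[K] a))
    = S4 s (fun a b c d => ⁅x, ⁅a, c⁆⁆ ⊗ₜ[K] (b ⊗ₜ[K] d) + ⁅a, c⁆ ⊗ₜ[K] (⁅x, b⁆ ⊗ₜ[K] d)
        + ⁅a, c⁆ ⊗ₜ[K] (b ⊗ₜ[K] ⁅x, d⁆)
        + (⁅x, a⁆ ⊗ₜ[K] (⁅b, c⁆ ⊗ₜ[K] d) + a ⊗ₜ[K] (⁅x, ⁅b, c⁆⁆ ⊗ₜ[K] d)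
          + a ⊗ₜ[K] (⁅b, c⁆ ⊗ₜ[K] ⁅x, d⁆))
        + (⁅x, a⁆ ⊗ₜ[K] (c ⊗ₜ[K] ⁅b, d⁆) + a ⊗ₜ[K] (⁅x, c⁆ ⊗ₜ[K] ⁅b, d⁆)
          + a ⊗ₜ[K] (c ⊗ₜ[K] ⁅x, ⁅b, d⁆⁆))) := by
  have lin : ∀ {f g : L → L → L → L → L ⊗[K] (L ⊗[K] L)},
      (∀ a b c d, f a b c d = g a b c d) → S4 s f = S4 s g := fun h => S4_congr s _ _ h
  -- split the three left sums and the right sum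
  have splitL1 : S4 s (fun a b c d => ⁅x, a⁆ ⊗ₜ[K] (⁅b, c⁆ ⊗ₜ[K] d) + ⁅x, a⁆ ⊗ₜ[K] (c ⊗ₜ[K] ⁅b, d⁆)
        + a ⊗ₜ[K] (⁅⁅x, b⁆, c⁆ ⊗ₜ[K] d) + a ⊗ₜ[K] (c ⊗ₜ[K] ⁅⁅x, b⁆, d⁆))
      = S4 s (fun a b c d => ⁅x, a⁆ ⊗ₜ[K] (⁅b, c⁆ ⊗ₜ[K] d))
        + S4 s (fun a b c d => ⁅x, a⁆ ⊗ₜ[K] (c ⊗ₜ[K] ⁅b, d⁆))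
        + S4 s (fun a b c d => a ⊗ₜ[K] (⁅⁅x, b⁆, c⁆ ⊗ₜ[K] d))
        + S4 s (fun a b c d => a ⊗ₜ[K] (c ⊗ₜ[K] ⁅⁅x, b⁆, d⁆)) := by
    simp [S4, Finset.sum_add_distrib]
  have splitL2 : S4 s (fun a b c d => d ⊗ₜ[K] (⁅x, a⁆ ⊗ₜ[K] ⁅b, c⁆) + ⁅b, d⁆ ⊗ₜ[K] (⁅x, a⁆ ⊗ₜ[K] c)
        + d ⊗ₜ[K] (a ⊗ₜ[K] ⁅⁅x, b⁆, c⁆) + ⁅⁅x, b⁆, d⁆ ⊗ₜ[K] (a ⊗ₜ[K] c))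
      = S4 s (fun a b c d => d ⊗ₜ[K] (⁅x, a⁆ ⊗ₜ[K] ⁅b, c⁆))
        + S4 s (fun a b c d => ⁅b, d⁆ ⊗ₜ[K] (⁅x, a⁆ ⊗ₜ[K] c))
        + S4 s (fun a b c d => d ⊗ₜ[K] (a ⊗ₜ[K] ⁅⁅x, b⁆, c⁆))
        + S4 s (fun a b c d => ⁅⁅x, b⁆, d⁆ ⊗ₜ[K] (a ⊗ₜ[K] c)) := by
    simp [S4, Finset.sum_add_distrib]
  have splitL3 : S4 s (fun a b c d => ⁅b, c⁆ ⊗ₜ[K] (d ⊗ₜ[K] ⁅x, a⁆) + c ⊗ₜ[K] (⁅b, d⁆ ⊗ₜ[K] ⁅x, a⁆)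
        + ⁅⁅x, b⁆, c⁆ ⊗ₜ[K] (d ⊗ₜ[K] a) + c ⊗ₜ[K] (⁅⁅x, b⁆, d⁆ ⊗ₜ[K] a))
      = S4 s (fun a b c d => ⁅b, c⁆ ⊗ₜ[K] (d ⊗ₜ[K] ⁅x, a⁆))
        + S4 s (fun a b c d => c ⊗ₜ[K] (⁅b, d⁆ ⊗ₜ[K] ⁅x, a⁆))
        + S4 s (fun a b c d => ⁅⁅x, b⁆, c⁆ ⊗ₜ[K] (d ⊗ₜ[K] a))
        + S4 s (fun a b c d => c ⊗ₜ[K] (⁅⁅x, b⁆, d⁆ ⊗ₜ[K] a)) := by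
    simp [S4, Finset.sum_add_distrib]
  have splitR : S4 s (fun a b c d => ⁅x, ⁅a, c⁆⁆ ⊗ₜ[K] (b ⊗ₜ[K] d) + ⁅a, c⁆ ⊗ₜ[K] (⁅x, b⁆ ⊗ₜ[K] d)
        + ⁅a, c⁆ ⊗ₜ[K] (b ⊗ₜ[K] ⁅x, d⁆)
        + (⁅x, a⁆ ⊗ₜ[K] (⁅b, c⁆ ⊗ₜ[K] d) + a ⊗ₜ[K] (⁅x, ⁅b, c⁆⁆ ⊗ₜ[K] d)
          + a ⊗ₜ[K] (⁅b, c⁆ ⊗ₜ[K] ⁅x, d⁆))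
        + (⁅x, a⁆ ⊗ₜ[K] (c ⊗ₜ[K] ⁅b, d⁆) + a ⊗ₜ[K] (⁅x, c⁆ ⊗ₜ[K] ⁅b, d⁆)
          + a ⊗ₜ[K] (c ⊗ₜ[K] ⁅x, ⁅b, d⁆⁆)))
      = S4 s (fun a b c d => ⁅x, ⁅a, c⁆⁆ ⊗ₜ[K] (b ⊗ₜ[K] d))
        + S4 s (fun a b c d => ⁅a, c⁆ ⊗ₜ[K] (⁅x, b⁆ ⊗ₜ[K] d))
        + S4 s (fun a b c d => ⁅a, c⁆ ⊗ₜ[K] (b ⊗ₜ[K] ⁅x, d⁆))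
        + S4 s (fun a b c d => ⁅x, a⁆ ⊗ₜ[K] (⁅b, c⁆ ⊗ₜ[K] d))
        + S4 s (fun a b c d => a ⊗ₜ[K] (⁅x, ⁅b, c⁆⁆ ⊗ₜ[K] d))
        + S4 s (fun a b c d => a ⊗ₜ[K] (⁅b, c⁆ ⊗ₜ[K] ⁅x, d⁆))
        + S4 s (fun a b c d => ⁅x, a⁆ ⊗ₜ[K] (c ⊗ₜ[K] ⁅b, d⁆))
        + S4 s (fun a b c d => a ⊗ₜ[K] (⁅x, c⁆ ⊗ₜ[K] ⁅b, d⁆))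
        + S4 s (fun a b c d => a ⊗ₜ[K] (c ⊗ₜ[K] ⁅x, ⁅b, d⁆⁆)) := by
    simp [S4, Finset.sum_add_distrib]; abel
  rw [splitL1, splitL2, splitL3, splitR]
  -- term 3 : Leibniz
  have e3 : S4 s (fun a b c d => a ⊗ₜ[K] (⁅⁅x, b⁆, c⁆ ⊗ₜ[K] d))
      = S4 s (fun a b c d => a ⊗ₜ[K] (⁅x, ⁅b, c⁆⁆ ⊗ₜ[K] d))
        - S4 s (fun a b c d => a ⊗ₜ[K] (⁅b, ⁅x, c⁆⁆ ⊗ₜ[K] d)) := by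
    rw [← S4_sub]
    exact lin fun a b c d => by rw [lie_lie, sub_tmul, tmul_sub]
  -- term 4 : Leibniz
  have e4 : S4 s (fun a b c d => a ⊗ₜ[K] (c ⊗ₜ[K] ⁅⁅x, b⁆, d⁆))
      = S4 s (fun a b c d => a ⊗ₜ[K] (c ⊗ₜ[K] ⁅x, ⁅b, d⁆⁆))
        - S4 s (fun a b c d => a ⊗ₜ[K] (c ⊗ₜ[K] ⁅b, ⁅x, d⁆⁆)) := by
    rw [← S4_sub]
    exact lin fun a b c d => by rw [lie_lie, tmul_sub, tmul_sub]
  -- term 5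
  have e5 : S4 s (fun a b c d => d ⊗ₜ[K] (⁅x, a⁆ ⊗ₜ[K] ⁅b, c⁆))
      = S4 s (fun a b c d => a ⊗ₜ[K] (⁅x, c⁆ ⊗ₜ[K] ⁅b, d⁆)) := by
    have s1 : S4 s (fun a b c d => d ⊗ₜ[K] (⁅x, a⁆ ⊗ₜ[K] ⁅b, c⁆))
        = - S4 s (fun a b c d => c ⊗ₜ[K] (⁅x, a⁆ ⊗ₜ[K] ⁅b, d⁆)) :=
      S4_flip₂ hr hs (fun a b u v => u ⊗ₜ[K] (⁅x, a⁆ ⊗ₜ[K] ⁅b, v⁆)) (by intros; simp [lie_add, add_lie, lie_smul, smul_lie, tmul_add, add_tmul, tmul_smul, smul_tmul]) (by intros; simp [lie_add, add_lie, lie_smul, smul_lie, tmul_add, add_tmul, tmul_smul, smul_tmul]) (by intros; simp [lie_add, add_lie, lie_smul, smul_lie, tmul_add, add_tmul, tmul_smul, smul_tmul]) (by intros; simp [lie_add, add_lie, lie_smul, smul_lie, tmul_add, add_tmul, tmul_smul, smul_tmul])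
    have s2 : S4 s (fun a b c d => c ⊗ₜ[K] (⁅x, a⁆ ⊗ₜ[K] ⁅b, d⁆))
        = S4 s (fun a b c d => a ⊗ₜ[K] (⁅x, c⁆ ⊗ₜ[K] ⁅d, b⁆)) :=
      S4_swap_pairs s (fun a b c d => a ⊗ₜ[K] (⁅x, c⁆ ⊗ₜ[K] ⁅d, b⁆))
    have s3 : S4 s (fun a b c d => a ⊗ₜ[K] (⁅x, c⁆ ⊗ₜ[K] ⁅d, b⁆))
        = - S4 s (fun a b c d => a ⊗ₜ[K] (⁅x, c⁆ ⊗ₜ[K] ⁅b, d⁆)) := by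
      rw [← S4_neg s (fun a b c d => a ⊗ₜ[K] (⁅x, c⁆ ⊗ₜ[K] ⁅b, d⁆))]
      exact lin fun a b c d => by rw [← lie_skew d b, tmul_neg, tmul_neg]
    rw [s1, s2, s3, neg_neg]
  -- term 6
  have e6 : S4 s (fun a b c d => ⁅b, d⁆ ⊗ₜ[K] (⁅x, a⁆ ⊗ₜ[K] c))
      = S4 s (fun a b c d => ⁅a, c⁆ ⊗ₜ[K] (⁅x, b⁆ ⊗ₜ[K] d)) := by
    have s1 : S4 s (fun a b c d => ⁅b, d⁆ ⊗ₜ[K] (⁅x, a⁆ ⊗ₜ[K] c))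
        = - S4 s (fun a b c d => ⁅a, d⁆ ⊗ₜ[K] (⁅x, b⁆ ⊗ₜ[K] c)) :=
      S4_flip₁ hr hs (fun u v c d => ⁅u, d⁆ ⊗ₜ[K] (⁅x, v⁆ ⊗ₜ[K] c)) (by intros; simp [lie_add, add_lie, lie_smul, smul_lie, tmul_add, add_tmul, tmul_smul, smul_tmul]) (by intros; simp [lie_add, add_lie, lie_smul, smul_lie, tmul_add, add_tmul, tmul_smul, smul_tmul]) (by intros; simp [lie_add, add_lie, lie_smul, smul_lie, tmul_add, add_tmul, tmul_smul, smul_tmul]) (by intros; simp [lie_add, add_lie, lie_smul, smul_lie, tmul_add, add_tmul, tmul_smul, smul_tmul])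
    have s2 : S4 s (fun a b c d => ⁅a, d⁆ ⊗ₜ[K] (⁅x, b⁆ ⊗ₜ[K] c))
        = - S4 s (fun a b c d => ⁅a, c⁆ ⊗ₜ[K] (⁅x, b⁆ ⊗ₜ[K] d)) :=
      S4_flip₂ hr hs (fun a b u v => ⁅a, u⁆ ⊗ₜ[K] (⁅x, b⁆ ⊗ₜ[K] v)) (by intros; simp [lie_add, add_lie, lie_smul, smul_lie, tmul_add, add_tmul, tmul_smul, smul_tmul]) (by intros; simp [lie_add, add_lie, lie_smul, smul_lie, tmul_add, add_tmul, tmul_smul, smul_tmul]) (by intros; simp [lie_add, add_lie, lie_smul, smul_lie, tmul_add, add_tmul, tmul_smul, smul_tmul]) (by intros; simp [lie_add, add_lie, lie_smul, smul_lie, tmul_add, add_tmul, tmul_smul, smul_tmul])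
    rw [s1, s2, neg_neg]
  -- term 7
  have e7 : S4 s (fun a b c d => d ⊗ₜ[K] (a ⊗ₜ[K] ⁅⁅x, b⁆, c⁆))
      = S4 s (fun a b c d => a ⊗ₜ[K] (c ⊗ₜ[K] ⁅b, ⁅x, d⁆⁆)) := by
    have s1 : S4 s (fun a b c d => d ⊗ₜ[K] (a ⊗ₜ[K] ⁅⁅x, b⁆, c⁆))
        = - S4 s (fun a b c d => c ⊗ₜ[K] (a ⊗ₜ[K] ⁅⁅x, b⁆, d⁆)) :=
      S4_flip₂ hr hs (fun a b u v => u ⊗ₜ[K] (a ⊗ₜ[K] ⁅⁅x, b⁆, v⁆)) (by intros; simp [lie_add, add_lie, lie_smul, smul_lie, tmul_add, add_tmul, tmul_smul, smul_tmul]) (by intros; simp [lie_add, add_lie, lie_smul, smul_lie, tmul_add, add_tmul, tmul_smul, smul_tmul]) (by intros; simp [lie_add, add_lie, lie_smul, smul_lie, tmul_add, add_tmul, tmul_smul, smul_tmul]) (by intros; simp [lie_add, add_lie, lie_smul, smul_lie, tmul_add, add_tmul, tmul_smul, smul_tmul])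
    have s2 : S4 s (fun a b c d => c ⊗ₜ[K] (a ⊗ₜ[K] ⁅⁅x, b⁆, d⁆))
        = S4 s (fun a b c d => a ⊗ₜ[K] (c ⊗ₜ[K] ⁅⁅x, d⁆, b⁆)) :=
      S4_swap_pairs s (fun a b c d => a ⊗ₜ[K] (c ⊗ₜ[K] ⁅⁅x, d⁆, b⁆))
    have s3 : S4 s (fun a b c d => a ⊗ₜ[K] (c ⊗ₜ[K] ⁅⁅x, d⁆, b⁆))
        = - S4 s (fun a b c d => a ⊗ₜ[K] (c ⊗ₜ[K] ⁅b, ⁅x, d⁆⁆)) := by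
      rw [← S4_neg s (fun a b c d => a ⊗ₜ[K] (c ⊗ₜ[K] ⁅b, ⁅x, d⁆⁆))]
      exact lin fun a b c d => by rw [← lie_skew ⁅x, d⁆ b, tmul_neg, tmul_neg]
    rw [s1, s2, s3, neg_neg]
  -- term 8
  have e8 : S4 s (fun a b c d => ⁅⁅x, b⁆, d⁆ ⊗ₜ[K] (a ⊗ₜ[K] c))
      = S4 s (fun a b c d => ⁅x, ⁅a, c⁆⁆ ⊗ₜ[K] (b ⊗ₜ[K] d))
        - S4 s (fun a b c d => ⁅a, ⁅x, c⁆⁆ ⊗ₜ[K] (b ⊗ₜ[K] d)) := by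
    have s1 : S4 s (fun a b c d => ⁅⁅x, b⁆, d⁆ ⊗ₜ[K] (a ⊗ₜ[K] c))
        = - S4 s (fun a b c d => ⁅⁅x, a⁆, d⁆ ⊗ₜ[K] (b ⊗ₜ[K] c)) :=
      S4_flip₁ hr hs (fun u v c d => ⁅⁅x, u⁆, d⁆ ⊗ₜ[K] (v ⊗ₜ[K] c)) (by intros; simp [lie_add, add_lie, lie_smul, smul_lie, tmul_add, add_tmul, tmul_smul, smul_tmul]) (by intros; simp [lie_add, add_lie, lie_smul, smul_lie, tmul_add, add_tmul, tmul_smul, smul_tmul]) (by intros; simp [lie_add, add_lie, lie_smul, smul_lie, tmul_add, add_tmul, tmul_smul, smul_tmul]) (by intros; simp [lie_add, add_lie, lie_smul, smul_lie, tmul_add, add_tmul, tmul_smul, smul_tmul])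
    have s2 : S4 s (fun a b c d => ⁅⁅x, a⁆, d⁆ ⊗ₜ[K] (b ⊗ₜ[K] c))
        = - S4 s (fun a b c d => ⁅⁅x, a⁆, c⁆ ⊗ₜ[K] (b ⊗ₜ[K] d)) :=
      S4_flip₂ hr hs (fun a b u v => ⁅⁅x, a⁆, u⁆ ⊗ₜ[K] (b ⊗ₜ[K] v)) (by intros; simp [lie_add, add_lie, lie_smul, smul_lie, tmul_add, add_tmul, tmul_smul, smul_tmul]) (by intros; simp [lie_add, add_lie, lie_smul, smul_lie, tmul_add, add_tmul, tmul_smul, smul_tmul]) (by intros; simp [lie_add, add_lie, lie_smul, smul_lie, tmul_add, add_tmul, tmul_smul, smul_tmul]) (by intros; simp [lie_add, add_lie, lie_smul, smul_lie, tmul_add, add_tmul, tmul_smul, smul_tmul])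
    have s3 : S4 s (fun a b c d => ⁅⁅x, a⁆, c⁆ ⊗ₜ[K] (b ⊗ₜ[K] d))
        = S4 s (fun a b c d => ⁅x, ⁅a, c⁆⁆ ⊗ₜ[K] (b ⊗ₜ[K] d))
          - S4 s (fun a b c d => ⁅a, ⁅x, c⁆⁆ ⊗ₜ[K] (b ⊗ₜ[K] d)) := by
      rw [← S4_sub]
      exact lin fun a b c d => by rw [lie_lie, sub_tmul]
    rw [s1, s2, neg_neg, s3]
  -- term 9
  have e9 : S4 s (fun a b c d => ⁅b, c⁆ ⊗ₜ[K] (d ⊗ₜ[K] ⁅x, a⁆))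
      = S4 s (fun a b c d => ⁅a, c⁆ ⊗ₜ[K] (b ⊗ₜ[K] ⁅x, d⁆)) := by
    have s1 : S4 s (fun a b c d => ⁅b, c⁆ ⊗ₜ[K] (d ⊗ₜ[K] ⁅x, a⁆))
        = - S4 s (fun a b c d => ⁅a, c⁆ ⊗ₜ[K] (d ⊗ₜ[K] ⁅x, b⁆)) :=
      S4_flip₁ hr hs (fun u v c d => ⁅u, c⁆ ⊗ₜ[K] (d ⊗ₜ[K] ⁅x, v⁆)) (by intros; simp [lie_add, add_lie, lie_smul, smul_lie, tmul_add, add_tmul, tmul_smul, smul_tmul]) (by intros; simp [lie_add, add_lie, lie_smul, smul_lie, tmul_add, add_tmul, tmul_smul, smul_tmul]) (by intros; simp [lie_add, add_lie, lie_smul, smul_lie, tmul_add, add_tmul, tmul_smul, smul_tmul]) (by intros; simp [lie_add, add_lie, lie_smul, smul_lie, tmul_add, add_tmul, tmul_smul, smul_tmul])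
    have s2 : S4 s (fun a b c d => ⁅a, c⁆ ⊗ₜ[K] (d ⊗ₜ[K] ⁅x, b⁆))
        = S4 s (fun a b c d => ⁅c, a⁆ ⊗ₜ[K] (b ⊗ₜ[K] ⁅x, d⁆)) :=
      S4_swap_pairs s (fun a b c d => ⁅c, a⁆ ⊗ₜ[K] (b ⊗ₜ[K] ⁅x, d⁆))
    have s3 : S4 s (fun a b c d => ⁅c, a⁆ ⊗ₜ[K] (b ⊗ₜ[K] ⁅x, d⁆))
        = - S4 s (fun a b c d => ⁅a, c⁆ ⊗ₜ[K] (b ⊗ₜ[K] ⁅x, d⁆)) := by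
      rw [← S4_neg s (fun a b c d => ⁅a, c⁆ ⊗ₜ[K] (b ⊗ₜ[K] ⁅x, d⁆))]
      exact lin fun a b c d => by rw [← lie_skew c a, neg_tmul]
    rw [s1, s2, s3, neg_neg]
  -- term 10
  have e10 : S4 s (fun a b c d => c ⊗ₜ[K] (⁅b, d⁆ ⊗ₜ[K] ⁅x, a⁆))
      = S4 s (fun a b c d => a ⊗ₜ[K] (⁅b, c⁆ ⊗ₜ[K] ⁅x, d⁆)) := by
    have s1 : S4 s (fun a b c d => c ⊗ₜ[K] (⁅b, d⁆ ⊗ₜ[K] ⁅x, a⁆))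
        = S4 s (fun a b c d => a ⊗ₜ[K] (⁅d, b⁆ ⊗ₜ[K] ⁅x, c⁆)) :=
      S4_swap_pairs s (fun a b c d => a ⊗ₜ[K] (⁅d, b⁆ ⊗ₜ[K] ⁅x, c⁆))
    have s2 : S4 s (fun a b c d => a ⊗ₜ[K] (⁅d, b⁆ ⊗ₜ[K] ⁅x, c⁆))
        = - S4 s (fun a b c d => a ⊗ₜ[K] (⁅b, d⁆ ⊗ₜ[K] ⁅x, c⁆)) := by
      rw [← S4_neg s (fun a b c d => a ⊗ₜ[K] (⁅b, d⁆ ⊗ₜ[K] ⁅x, c⁆))]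
      exact lin fun a b c d => by rw [← lie_skew d b, neg_tmul, tmul_neg]
    have s3 : S4 s (fun a b c d => a ⊗ₜ[K] (⁅b, d⁆ ⊗ₜ[K] ⁅x, c⁆))
        = - S4 s (fun a b c d => a ⊗ₜ[K] (⁅b, c⁆ ⊗ₜ[K] ⁅x, d⁆)) :=
      S4_flip₂ hr hs (fun a b u v => a ⊗ₜ[K] (⁅b, u⁆ ⊗ₜ[K] ⁅x, v⁆)) (by intros; simp [lie_add, add_lie, lie_smul, smul_lie, tmul_add, add_tmul, tmul_smul, smul_tmul]) (by intros; simp [lie_add, add_lie, lie_smul, smul_lie, tmul_add, add_tmul, tmul_smul, smul_tmul]) (by intros; simp [lie_add, add_lie, lie_smul, smul_lie, tmul_add, add_tmul, tmul_smul, smul_tmul]) (by intros; simp [lie_add, add_lie, lie_smul, smul_lie, tmul_add, add_tmul, tmul_smul, smul_tmul])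
    rw [s1, s2, s3, neg_neg]
  -- term 11
  have e11 : S4 s (fun a b c d => ⁅⁅x, b⁆, c⁆ ⊗ₜ[K] (d ⊗ₜ[K] a))
      = S4 s (fun a b c d => ⁅a, ⁅x, c⁆⁆ ⊗ₜ[K] (b ⊗ₜ[K] d)) := by
    have s1 : S4 s (fun a b c d => ⁅⁅x, b⁆, c⁆ ⊗ₜ[K] (d ⊗ₜ[K] a))
        = - S4 s (fun a b c d => ⁅⁅x, a⁆, c⁆ ⊗ₜ[K] (d ⊗ₜ[K] b)) :=
      S4_flip₁ hr hs (fun u v c d => ⁅⁅x, u⁆, c⁆ ⊗ₜ[K] (d ⊗ₜ[K] v)) (by intros; simp [lie_add, add_lie, lie_smul, smul_lie, tmul_add, add_tmul, tmul_smul, smul_tmul]) (by intros; simp [lie_add, add_lie, lie_smul, smul_lie, tmul_add, add_tmul, tmul_smul, smul_tmul]) (by intros; simp [lie_add, add_lie, lie_smul, smul_lie, tmul_add, add_tmul, tmul_smul, smul_tmul]) (by intros; simp [lie_add, add_lie, lie_smul, smul_lie, tmul_add, add_tmul, tmul_smul, smul_tmul])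
    have s2 : S4 s (fun a b c d => ⁅⁅x, a⁆, c⁆ ⊗ₜ[K] (d ⊗ₜ[K] b))
        = S4 s (fun a b c d => ⁅⁅x, c⁆, a⁆ ⊗ₜ[K] (b ⊗ₜ[K] d)) :=
      S4_swap_pairs s (fun a b c d => ⁅⁅x, c⁆, a⁆ ⊗ₜ[K] (b ⊗ₜ[K] d))
    have s3 : S4 s (fun a b c d => ⁅⁅x, c⁆, a⁆ ⊗ₜ[K] (b ⊗ₜ[K] d))
        = - S4 s (fun a b c d => ⁅a, ⁅x, c⁆⁆ ⊗ₜ[K] (b ⊗ₜ[K] d)) := by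
      rw [← S4_neg s (fun a b c d => ⁅a, ⁅x, c⁆⁆ ⊗ₜ[K] (b ⊗ₜ[K] d))]
      exact lin fun a b c d => by rw [← lie_skew ⁅x, c⁆ a, neg_tmul]
    rw [s1, s2, s3, neg_neg]
  -- term 12
  have e12 : S4 s (fun a b c d => c ⊗ₜ[K] (⁅⁅x, b⁆, d⁆ ⊗ₜ[K] a))
      = S4 s (fun a b c d => a ⊗ₜ[K] (⁅b, ⁅x, c⁆⁆ ⊗ₜ[K] d)) := by
    have s1 : S4 s (fun a b c d => c ⊗ₜ[K] (⁅⁅x, b⁆, d⁆ ⊗ₜ[K] a))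
        = S4 s (fun a b c d => a ⊗ₜ[K] (⁅⁅x, d⁆, b⁆ ⊗ₜ[K] c)) :=
      S4_swap_pairs s (fun a b c d => a ⊗ₜ[K] (⁅⁅x, d⁆, b⁆ ⊗ₜ[K] c))
    have s2 : S4 s (fun a b c d => a ⊗ₜ[K] (⁅⁅x, d⁆, b⁆ ⊗ₜ[K] c))
        = - S4 s (fun a b c d => a ⊗ₜ[K] (⁅b, ⁅x, d⁆⁆ ⊗ₜ[K] c)) := by
      rw [← S4_neg s (fun a b c d => a ⊗ₜ[K] (⁅b, ⁅x, d⁆⁆ ⊗ₜ[K] c))]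
      exact lin fun a b c d => by rw [← lie_skew ⁅x, d⁆ b, neg_tmul, tmul_neg]
    have s3 : S4 s (fun a b c d => a ⊗ₜ[K] (⁅b, ⁅x, d⁆⁆ ⊗ₜ[K] c))
        = - S4 s (fun a b c d => a ⊗ₜ[K] (⁅b, ⁅x, c⁆⁆ ⊗ₜ[K] d)) :=
      S4_flip₂ hr hs (fun a b u v => a ⊗ₜ[K] (⁅b, ⁅x, u⁆⁆ ⊗ₜ[K] v)) (by intros; simp [lie_add, add_lie, lie_smul, smul_lie, tmul_add, add_tmul, tmul_smul, smul_tmul]) (by intros; simp [lie_add, add_lie, lie_smul, smul_lie, tmul_add, add_tmul, tmul_smul, smul_tmul]) (by intros; simp [lie_add, add_lie, lie_smul, smul_lie, tmul_add, add_tmul, tmul_smul, smul_tmul]) (by intros; simp [lie_add, add_lie, lie_smul, smul_lie, tmul_add, add_tmul, tmul_smul, smul_tmul])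
    rw [s1, s2, s3, neg_neg]
  rw [e3, e4, e5, e6, e7, e8, e9, e10, e11, e12]
  abel

end YBAux2
section YBFinal

variable {K : Type*} [Field K] {L : Type*} [LieRing L] [LieAlgebra K L]

lemma cycW_expand (s : Finset (L × L)) (x : L) :
    cyc3 K L (∑ p ∈ s, ∑ q ∈ s,
        (⁅x, p.1⁆ ⊗ₜ[K] (⁅p.2, q.1⁆ ⊗ₜ[K] q.2) + ⁅x, p.1⁆ ⊗ₜ[K] (q.1 ⊗ₜ[K] ⁅p.2, q.2⁆)
          + p.1 ⊗ₜ[K] (⁅⁅x, p.2⁆, q.1⁆ ⊗ₜ[K] q.2) + p.1 ⊗ₜ[K] (q.1 ⊗ₜ[K] ⁅⁅x, p.2⁆, q.2⁆)))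
      = ∑ p ∈ s, ∑ q ∈ s,
        (q.2 ⊗ₜ[K] (⁅x, p.1⁆ ⊗ₜ[K] ⁅p.2, q.1⁆) + ⁅p.2, q.2⁆ ⊗ₜ[K] (⁅x, p.1⁆ ⊗ₜ[K] q.1)
          + q.2 ⊗ₜ[K] (p.1 ⊗ₜ[K] ⁅⁅x, p.2⁆, q.1⁆) + ⁅⁅x, p.2⁆, q.2⁆ ⊗ₜ[K] (p.1 ⊗ₜ[K] q.1)) := by
  rw [map_sum]
  refine Finset.sum_congr rfl fun p _ => ?_
  rw [map_sum]
  exact Finset.sum_congr rfl fun q _ => by simp only [map_add, cyc3_tmul]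

lemma cyc2W_expand (s : Finset (L × L)) (x : L) :
    cyc3 K L (∑ p ∈ s, ∑ q ∈ s,
        (q.2 ⊗ₜ[K] (⁅x, p.1⁆ ⊗ₜ[K] ⁅p.2, q.1⁆) + ⁅p.2, q.2⁆ ⊗ₜ[K] (⁅x, p.1⁆ ⊗ₜ[K] q.1)
          + q.2 ⊗ₜ[K] (p.1 ⊗ₜ[K] ⁅⁅x, p.2⁆, q.1⁆) + ⁅⁅x, p.2⁆, q.2⁆ ⊗ₜ[K] (p.1 ⊗ₜ[K] q.1)))
      = ∑ p ∈ s, ∑ q ∈ s,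
        (⁅p.2, q.1⁆ ⊗ₜ[K] (q.2 ⊗ₜ[K] ⁅x, p.1⁆) + q.1 ⊗ₜ[K] (⁅p.2, q.2⁆ ⊗ₜ[K] ⁅x, p.1⁆)
          + ⁅⁅x, p.2⁆, q.1⁆ ⊗ₜ[K] (q.2 ⊗ₜ[K] p.1) + q.1 ⊗ₜ[K] (⁅⁅x, p.2⁆, q.2⁆ ⊗ₜ[K] p.1)) := by
  rw [map_sum]
  refine Finset.sum_congr rfl fun p _ => ?_
  rw [map_sum]
  exact Finset.sum_congr rfl fun q _ => by simp only [map_add, cyc3_tmul]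

lemma key_identity (r : L ⊗[K] L) (hr : TensorProduct.comm K L L r = -r) (x : L) :
    TensorProduct.map LinearMap.id (deltaR r) (deltaR r x)
      + cyc3 K L (TensorProduct.map LinearMap.id (deltaR r) (deltaR r x))
      + cyc3 K L (cyc3 K L (TensorProduct.map LinearMap.id (deltaR r) (deltaR r x)))
      = ⁅x, ybMap K L (r ⊗ₜ[K] r)⁆ := by
  obtain ⟨s, hs⟩ := TensorProduct.exists_finset r
  rw [W_expand hs x, rhs_expand hs x, cycW_expand s x, cyc2W_expand s x]
  exact combinatorial hr hs x

lemma rBracket_nest (r : L ⊗[K] L) (ξ η ζ : Module.Dual K L) (x : L) :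
    rBracket r ξ (rBracket r η ζ) x
      = trip ξ η ζ (TensorProduct.map LinearMap.id (deltaR r) (deltaR r x)) := by
  show TensorProduct.dualDistrib K L L (ξ ⊗ₜ[K] rBracket r η ζ) (deltaR r x) = _
  generalize deltaR r x = t
  induction t using TensorProduct.induction_on with
  | zero => simp
  | add a b ha hb => simp [map_add, ha, hb]
  | tmul u v =>
    simp only [TensorProduct.map_tmul, LinearMap.id_coe, id_eq, trip_tmul,
      TensorProduct.dualDistrib_apply]
    rfl

end YBFinal

/-- The bracket `[·,·]_r` on `g*` satisfies the Jacobi identity if and only if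
`⟦r, r⟧` is `g`-invariant, i.e. `r` solves the modified classical Yang–Baxter
equation; equivalently, `δ_r` is a cocommutator precisely when `r` solves the mCYBE. -/
theorem rBracket_jacobi_iff_mcybe
    {K : Type*} [Field K] {L : Type*} [LieRing L] [LieAlgebra K L]
    (r : L ⊗[K] L) (hr : TensorProduct.comm K L L r = -r) :
    (∀ ξ η ζ : Module.Dual K L,
        rBracket r ξ (rBracket r η ζ) + rBracket r η (rBracket r ζ ξ)
          + rBracket r ζ (rBracket r ξ η) = 0)
      ↔ (∀ x : L, ⁅x, ybMap K L (r ⊗ₜ[K] r)⁆ = 0) := by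
  have expand : ∀ (ξ η ζ : Module.Dual K L) (x : L),
      rBracket r ξ (rBracket r η ζ) x + rBracket r η (rBracket r ζ ξ) x
        + rBracket r ζ (rBracket r ξ η) x
      = trip ξ η ζ (TensorProduct.map LinearMap.id (deltaR r) (deltaR r x)
          + cyc3 K L (TensorProduct.map LinearMap.id (deltaR r) (deltaR r x))
          + cyc3 K L (cyc3 K L (TensorProduct.map LinearMap.id (deltaR r) (deltaR r x)))) := by
    intro ξ η ζ x
    have h1 := rBracket_nest r ξ η ζ x
    have h2 : rBracket r η (rBracket r ζ ξ) x
        = trip ξ η ζ (cyc3 K L (TensorProduct.map LinearMap.id (deltaR r) (deltaR r x))) :=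
      (rBracket_nest r η ζ ξ x).trans (trip_cyc3 ξ η ζ _).symm
    have h3 : rBracket r ζ (rBracket r ξ η) x
        = trip ξ η ζ (cyc3 K L (cyc3 K L
            (TensorProduct.map LinearMap.id (deltaR r) (deltaR r x)))) := by
      refine (rBracket_nest r ζ ξ η x).trans ?_
      rw [trip_cyc3 ξ η ζ, trip_cyc3 η ζ ξ]
    rw [h1, h2, h3, map_add, map_add]
  constructor
  · intro h x
    rw [← key_identity r hr x, ← trip_eq_zero_iff]
    intro ξ η ζ
    have hx := LinearMap.congr_fun (h ξ η ζ) x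
    simp only [LinearMap.add_apply, LinearMap.zero_apply] at hx
    rw [expand ξ η ζ x] at hx
    exact hx
  · intro h ξ η ζ
    apply LinearMap.ext
    intro x
    simp only [LinearMap.add_apply, LinearMap.zero_apply]
    rw [expand ξ η ζ x, key_identity r hr x, h x, map_zero]
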